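/- If (u*, v*) minimizes h over ℝⁿ × ℝⁿ, then u*/τ = log a − log a(u*,v*) and v*/τ = log b − log b(u*,v*), where the logarithms are taken componentwise. -/

import Mathlib

/-- The dual entropic regularized UOT objective. -/
noncomputable def dualUOT {n : ℕ} (a b : Fin n → ℝ) (C : Fin n → Fin n → ℝ)
    (τ η : ℝ) (u v : Fin n → ℝ) : ℝ :=
  η * ∑ i, ∑ j, Real.exp ((u i + v j - C i j) / η)
    + τ * ∑ i, a i * Real.exp (-(u i) / τ)
    + τ * ∑ j, b j * Real.exp (-(v j) / τ)

/-- First-order optimality in one coordinate for the generic one-sided objective. -/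
lemma uot_aux {n : ℕ} (η τ : ℝ) (hη : 0 < η) (hτ : 0 < τ)
    (w : Fin n → ℝ) (e : Fin n → Fin n → ℝ) (c : Fin n → ℝ)
    (i : Fin n) (K : ℝ)
    (hmin : ∀ t : ℝ,
      η * ∑ k, ∑ l, Real.exp ((w k + e k l) / η)
        + τ * ∑ k, c k * Real.exp (-(w k) / τ) + K
      ≤ η * ∑ k, ∑ l, Real.exp ((Function.update w i t k + e k l) / η)
        + τ * ∑ k, c k * Real.exp (-(Function.update w i t k) / τ) + K) :
    c i * Real.exp (-(w i) / τ) = ∑ l, Real.exp ((w i + e i l) / η) := by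
  set φ : ℝ → ℝ := fun t =>
    η * ∑ k, ∑ l, Real.exp ((Function.update w i t k + e k l) / η)
      + τ * ∑ k, c k * Real.exp (-(Function.update w i t k) / τ) + K with hφdef
  have hloc : IsLocalMin φ (w i) := by
    apply Filter.Eventually.of_forall
    intro t
    have h := hmin t
    simpa [hφdef, Function.update_eq_self] using h
  have hS : ∀ k : Fin n, HasDerivAt
      (fun t => ∑ l, Real.exp ((Function.update w i t k + e k l) / η))
      (if k = i then ∑ l, Real.exp ((w i + e i l) / η) * (1 / η) else 0) (w i) := by
    intro k
    rcases eq_or_ne k i with rfl | hk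
    · simp only [if_pos rfl]
      have heq : (fun t => ∑ l, Real.exp ((Function.update w k t k + e k l) / η))
          = fun t => ∑ l, Real.exp ((t + e k l) / η) := by
        funext t; simp
      rw [heq]
      refine HasDerivAt.fun_sum fun l _ => ?_
      have h1 : HasDerivAt (fun t : ℝ => (t + e k l) / η) (1 / η) (w k) := by
        simpa using ((hasDerivAt_id (w k)).add_const (e k l)).div_const η
      simpa using h1.exp
    · simp only [if_neg hk]
      have heq : (fun t => ∑ l, Real.exp ((Function.update w i t k + e k l) / η))
          = fun _ => ∑ l, Real.exp ((w k + e k l) / η) := by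
        funext t; simp [Function.update_of_ne hk]
      rw [heq]; exact hasDerivAt_const _ _
  have hT : ∀ k : Fin n, HasDerivAt
      (fun t => c k * Real.exp (-(Function.update w i t k) / τ))
      (if k = i then c i * (Real.exp (-(w i) / τ) * (-1 / τ)) else 0) (w i) := by
    intro k
    rcases eq_or_ne k i with rfl | hk
    · simp only [if_pos rfl]
      have heq : (fun t => c k * Real.exp (-(Function.update w k t k) / τ))
          = fun t => c k * Real.exp (-t / τ) := by
        funext t; simp
      rw [heq]
      have h1 : HasDerivAt (fun t : ℝ => -t / τ) (-1 / τ) (w k) := by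
        simpa using ((hasDerivAt_id (w k)).neg.div_const τ)
      exact (h1.exp.const_mul (c k))
    · simp only [if_neg hk]
      have heq : (fun t => c k * Real.exp (-(Function.update w i t k) / τ))
          = fun _ => c k * Real.exp (-(w k) / τ) := by
        funext t; simp [Function.update_of_ne hk]
      rw [heq]; exact hasDerivAt_const _ _
  have hφ : HasDerivAt φ
      (η * ∑ k, (if k = i then ∑ l, Real.exp ((w i + e i l) / η) * (1 / η) else 0)
        + τ * ∑ k, (if k = i then c i * (Real.exp (-(w i) / τ) * (-1 / τ)) else 0))
      (w i) := by
    exact (((HasDerivAt.fun_sum fun k _ => hS k).const_mul η).add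
      ((HasDerivAt.fun_sum fun k _ => hT k).const_mul τ)).add_const K
  have hzero := hloc.hasDerivAt_eq_zero hφ
  rw [Finset.sum_ite_eq' Finset.univ i, Finset.sum_ite_eq' Finset.univ i] at hzero
  simp only [Finset.mem_univ, if_pos, ← Finset.sum_mul] at hzero
  have hη' : η ≠ 0 := ne_of_gt hη
  have hτ' : τ ≠ 0 := ne_of_gt hτ
  field_simp at hzero
  have h2 : (∑ l, Real.exp ((w i + e i l) / η)) * τ
      = (c i * Real.exp (-(w i) / τ)) * τ := by rw [neg_div]; linear_combination τ * hzero
  exact (mul_right_cancel₀ hτ' h2).symm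

/-- If `(u*, v*)` minimizes `h`, then `u*/τ = log a − log a(u*,v*)` and
`v*/τ = log b − log b(u*,v*)` componentwise, where `a(u,v)` and `b(u,v)` are the
row and column sums of `B(u,v)ᵢⱼ = exp((uᵢ + vⱼ − Cᵢⱼ)/η)`. -/
theorem stmt_2 {n : ℕ} (hn : 2 ≤ n) (a b : Fin n → ℝ)
    (ha : ∀ i, 0 < a i) (hb : ∀ j, 0 < b j)
    (C : Fin n → Fin n → ℝ) (hC : ∀ i j, 0 ≤ C i j)
    (τ η : ℝ) (hτ : 0 < τ) (hη : 0 < η)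
    (ustar vstar : Fin n → ℝ)
    (hmin : ∀ u v : Fin n → ℝ, dualUOT a b C τ η ustar vstar ≤ dualUOT a b C τ η u v) :
    (∀ i, ustar i / τ
        = Real.log (a i)
          - Real.log (∑ j, Real.exp ((ustar i + vstar j - C i j) / η))) ∧
    (∀ j, vstar j / τ
        = Real.log (b j)
          - Real.log (∑ i, Real.exp ((ustar i + vstar j - C i j) / η))) := by
  have hne : Nonempty (Fin n) := ⟨⟨0, by omega⟩⟩
  have huform : ∀ u : Fin n → ℝ, dualUOT a b C τ η u vstar
      = η * ∑ k, ∑ l, Real.exp ((u k + (vstar l - C k l)) / η)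
        + τ * ∑ k, a k * Real.exp (-(u k) / τ)
        + (τ * ∑ j, b j * Real.exp (-(vstar j) / τ)) := by
    intro u
    simp only [dualUOT, add_sub_assoc]
  have hvform : ∀ v : Fin n → ℝ, dualUOT a b C τ η ustar v
      = η * ∑ k, ∑ l, Real.exp ((v k + (ustar l - C l k)) / η)
        + τ * ∑ k, b k * Real.exp (-(v k) / τ)
        + (τ * ∑ i, a i * Real.exp (-(ustar i) / τ)) := by
    intro v
    simp only [dualUOT]
    rw [Finset.sum_comm]
    have : ∀ k l, ustar l + v k - C l k = v k + (ustar l - C l k) := by intros; ring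
    simp only [this]
    ring
  constructor
  · intro i
    have key : a i * Real.exp (-(ustar i) / τ)
        = ∑ l, Real.exp ((ustar i + (vstar l - C i l)) / η) := by
      apply uot_aux η τ hη hτ ustar (fun k l => vstar l - C k l) a i
        (τ * ∑ j, b j * Real.exp (-(vstar j) / τ))
      intro t
      have h := hmin (Function.update ustar i t) vstar
      rw [huform ustar, huform (Function.update ustar i t)] at h
      exact h
    have key' : a i * Real.exp (-(ustar i) / τ)
        = ∑ j, Real.exp ((ustar i + vstar j - C i j) / η) := by
      rw [key]; congr 1; funext l; rw [add_sub_assoc]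
    have hSpos : 0 < ∑ j, Real.exp ((ustar i + vstar j - C i j) / η) :=
      Finset.sum_pos (fun j _ => Real.exp_pos _) Finset.univ_nonempty
    have hlog := congrArg Real.log key'
    rw [Real.log_mul (ne_of_gt (ha i)) (Real.exp_ne_zero _), Real.log_exp] at hlog
    have : -(ustar i) / τ = -(ustar i / τ) := by ring
    rw [this] at hlog
    linarith
  · intro j
    have key : b j * Real.exp (-(vstar j) / τ)
        = ∑ l, Real.exp ((vstar j + (ustar l - C l j)) / η) := by
      apply uot_aux η τ hη hτ vstar (fun k l => ustar l - C l k) b j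
        (τ * ∑ i, a i * Real.exp (-(ustar i) / τ))
      intro t
      have h := hmin ustar (Function.update vstar j t)
      rw [hvform vstar, hvform (Function.update vstar j t)] at h
      exact h
    have key' : b j * Real.exp (-(vstar j) / τ)
        = ∑ i, Real.exp ((ustar i + vstar j - C i j) / η) := by
      rw [key]; congr 1; funext l; congr 1; ring
    have hSpos : 0 < ∑ i, Real.exp ((ustar i + vstar j - C i j) / η) :=
      Finset.sum_pos (fun i _ => Real.exp_pos _) Finset.univ_nonempty
    have hlog := congrArg Real.log key'
    rw [Real.log_mul (ne_of_gt (hb j)) (Real.exp_ne_zero _), Real.log_exp] at hlog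
    have : -(vstar j) / τ = -(vstar j / τ) := by ring
    rw [this] at hlog
    linarith
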